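/- Let v : 2^O → ℝ be an order-neutral submodular function and τ ∈ ℝ. Define β^τ(S) as the number of entries of the sorted telescoping sum vector of S (under v) that are ≥ τ. Then β^τ is a binary submodular function: β^τ(∅) = 0, every marginal gain of β^τ is in {0,1}, and β^τ is submodular. -/

import Mathlib

open Finset

/-- A set function is submodular: `v ∅ = 0` and decreasing marginal gains. -/
def Submodular {α : Type*} [DecidableEq α] (v : Finset α → ℝ) : Prop :=
  v ∅ = 0 ∧ ∀ S T : Finset α, S ⊆ T → ∀ o ∉ T,
    v (insert o T) - v T ≤ v (insert o S) - v S

/-- The telescoping sum vector of marginal gains along an ordering `l`. -/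
def margList {α : Type*} [DecidableEq α] (v : Finset α → ℝ) (l : List α) : List ℝ :=
  (List.range l.length).map fun j =>
    v ((l.take (j + 1)).toFinset) - v ((l.take j).toFinset)

/-- The sorted (ascending) telescoping sum vector. -/
noncomputable def sortedVec {α : Type*} [DecidableEq α] (v : Finset α → ℝ) (l : List α) :
    List ℝ :=
  Multiset.sort (margList v l) (· ≤ ·)

/-- `l` is an ordering of the bundle `S`. -/
def IsOrdering {α : Type*} [DecidableEq α] (l : List α) (S : Finset α) : Prop :=
  l.Nodup ∧ l.toFinset = S

/-- Order-neutrality: any two orderings of a bundle give the same sorted telescoping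
sum vector. -/
def OrderNeutral {α : Type*} [DecidableEq α] (v : Finset α → ℝ) : Prop :=
  ∀ (S : Finset α) (l₁ l₂ : List α), IsOrdering l₁ S → IsOrdering l₂ S →
    sortedVec v l₁ = sortedVec v l₂

/-- for an order-neutral submodular `v` and threshold `τ`, the function
`β` counting entries `≥ τ` of the sorted telescoping sum vector is a binary submodular
function: `β ∅ = 0`, marginal gains in `{0, 1}`, and submodularity. -/
lemma margList_append_singleton {α : Type*} [DecidableEq α] (v : Finset α → ℝ)
    (l : List α) (o : α) :
    margList v (l ++ [o]) = margList v l ++ [v (insert o l.toFinset) - v l.toFinset] := by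
  unfold margList
  rw [List.length_append, List.length_singleton, List.range_succ, List.map_append]
  congr 1
  · apply List.map_congr_left
    intro j hj
    rw [List.mem_range] at hj
    rw [List.take_append_of_le_length (by omega), List.take_append_of_le_length (by omega)]
  · simp only [List.map_singleton]
    rw [List.take_of_length_le (by simp),
      List.take_append_of_le_length (le_refl _), List.take_length]
    have h : (l ++ [o]).toFinset = insert o l.toFinset := by ext x; simp [or_comm]
    rw [h]

lemma beta_insert {α : Type*} [DecidableEq α] (v : Finset α → ℝ) (τ : ℝ)
    (β : Finset α → ℕ)
    (hβ : ∀ (S : Finset α) (l : List α), IsOrdering l S →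
      β S = (margList v l).countP (fun x => decide (τ ≤ x)))
    (S : Finset α) (o : α) (ho : o ∉ S) :
    β (insert o S) = β S + (if τ ≤ v (insert o S) - v S then 1 else 0) := by
  have hl : IsOrdering S.toList S := ⟨S.nodup_toList, S.toList_toFinset⟩
  have hl' : IsOrdering (S.toList ++ [o]) (insert o S) := by
    constructor
    · rw [List.nodup_append]
      exact ⟨S.nodup_toList, List.nodup_singleton o,
        by intro x hx y hy hxy; simp at hy; subst hy; subst hxy; exact ho (by simpa using hx)⟩
    · ext x; simp [or_comm]
  rw [hβ _ _ hl, hβ _ _ hl', margList_append_singleton, List.countP_append,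
    S.toList_toFinset]
  simp [List.countP_singleton]

theorem threshold_count_binary_submodular {α : Type*} [Fintype α] [DecidableEq α]
    (v : Finset α → ℝ) (τ : ℝ) (hsub : Submodular v) (hon : OrderNeutral v)
    (β : Finset α → ℕ)
    (hβ : ∀ (S : Finset α) (l : List α), IsOrdering l S →
      β S = (margList v l).countP (fun x => decide (τ ≤ x))) :
    β ∅ = 0 ∧
    (∀ (S : Finset α) (o : α), o ∉ S →
      ((β (insert o S) : ℤ) - (β S : ℤ)) ∈ ({0, 1} : Set ℤ)) ∧
    (∀ S T : Finset α, S ⊆ T → ∀ o ∉ T,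
      (β (insert o T) : ℤ) - (β T : ℤ) ≤ (β (insert o S) : ℤ) - (β S : ℤ)) := by
  obtain ⟨h0, hdec⟩ := hsub
  refine ⟨?_, ?_, ?_⟩
  · have := hβ ∅ [] ⟨List.nodup_nil, by simp⟩
    simpa [margList] using this
  · intro S o ho
    rw [beta_insert v τ β hβ S o ho]
    by_cases h : τ ≤ v (insert o S) - v S <;> simp [h]
  · intro S T hST o hoT
    have hoS : o ∉ S := fun h => hoT (hST h)
    rw [beta_insert v τ β hβ S o hoS, beta_insert v τ β hβ T o hoT]
    have hmono := hdec S T hST o hoT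
    by_cases hT : τ ≤ v (insert o T) - v T
    · have hS : τ ≤ v (insert o S) - v S := le_trans hT hmono
      simp [hT, hS]
    · by_cases hS : τ ≤ v (insert o S) - v S <;> simp [hT, hS]
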